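/- Let n, N, k be natural numbers with k ≥ 1. Let g : ℝⁿ → ℂ be of class C^k such that every partial derivative ∂^α g with |α| ≤ k has polynomial decay order N, and let f : ℝⁿ → ℂ be measurable with vanishing moments of order k and polynomial decay order N + k + n + 1. Then there exists a constant C, depending only on the decay constants of f and of the ∂^α g, such that for all x ∈ ℝⁿ and all t > 1: |(g * D_t f)(x)| ≤ C t^{−k} (1 + |x|)^{−N}. -/

import Mathlib

open MeasureTheory

/-- The `L¹`-normalized dilation `D_t f (x) = tⁿ f(t • x)` on `ℝⁿ`. -/
noncomputable def dil (n : ℕ) (t : ℝ) (f : EuclideanSpace ℝ (Fin n) → ℂ) :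
    EuclideanSpace ℝ (Fin n) → ℂ :=
  fun x => (t : ℂ) ^ n * f (t • x)

/-- Convolution `(f * g)(x) = ∫ f(y) g(x − y) dy` on `ℝⁿ`. -/
noncomputable def conv (n : ℕ) (f g : EuclideanSpace ℝ (Fin n) → ℂ) :
    EuclideanSpace ℝ (Fin n) → ℂ :=
  fun x => ∫ y, f y * g (x - y)

/-- The monomial `x^α` associated to a multi-index `α`. -/
def mono (n : ℕ) (α : Fin n → ℕ) (x : EuclideanSpace ℝ (Fin n)) : ℂ :=
  ∏ i, (x i : ℂ) ^ (α i)

/-- `f` has vanishing moments of order `k`: `∫ f(x) x^α dx = 0`, with absolute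
convergence, for every multi-index `α` with `|α| ≤ k − 1`. -/
def VanishingMoments (n k : ℕ) (f : EuclideanSpace ℝ (Fin n) → ℂ) : Prop :=
  ∀ α : Fin n → ℕ, (∑ i, α i) + 1 ≤ k →
    Integrable (fun x => f x * mono n α x) ∧ (∫ x, f x * mono n α x) = 0


open Finset Set

private lemma iteratedDeriv_line {E' : Type*} [NormedAddCommGroup E'] [NormedSpace ℝ E']
    {K : ℕ} {g : E' → ℂ} (hg : ContDiff ℝ (K : ℕ∞) g) (x w : E') :
    ∀ i, i ≤ K → ∀ s : ℝ,
      iteratedDeriv i (fun s : ℝ => g (x + s • w)) s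
        = iteratedFDeriv ℝ i g (x + s • w) (fun _ => w) := by
  intro i
  induction i with
  | zero => intro _ s; simp
  | succ i ih =>
    intro hi s
    have hix : i ≤ K := Nat.le_of_succ_le hi
    have heq : iteratedDeriv i (fun s : ℝ => g (x + s • w))
        = fun s : ℝ => iteratedFDeriv ℝ i g (x + s • w) (fun _ => w) :=
      funext fun s => ih hix s
    rw [iteratedDeriv_succ, heq]
    have hline : HasDerivAt (fun s : ℝ => x + s • w) w s := by
      simpa using ((hasDerivAt_id s).smul_const w).const_add x
    have hF : DifferentiableAt ℝ (iteratedFDeriv ℝ i g) (x + s • w) :=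
      (hg.differentiable_iteratedFDeriv (by exact_mod_cast Nat.lt_of_succ_le hi)) _
    have h3 : HasDerivAt (fun s : ℝ => iteratedFDeriv ℝ i g (x + s • w))
        (fderiv ℝ (iteratedFDeriv ℝ i g) (x + s • w) w) s :=
      hF.hasFDerivAt.comp_hasDerivAt s hline
    have h4 := ((ContinuousMultilinearMap.apply ℝ (fun _ : Fin i => E') ℂ
        (fun _ => w)).hasFDerivAt.comp_hasDerivAt s h3)
    simp only [ContinuousMultilinearMap.apply_apply, Function.comp_def] at h4
    rw [h4.deriv, iteratedFDeriv_succ_apply_left]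
    rfl

private lemma iteratedDerivWithin_Icc_eq {φ : ℝ → ℂ} {K : ℕ} (hφ : ContDiff ℝ (K : ℕ∞) φ) :
    ∀ i, i ≤ K → ∀ y ∈ Set.Icc (0:ℝ) 1,
      iteratedDerivWithin i φ (Set.Icc 0 1) y = iteratedDeriv i φ y := by
  intro i
  induction i with
  | zero => intro _ y _; simp
  | succ i ih =>
    intro hi y hy
    have hud : UniqueDiffOn ℝ (Set.Icc (0:ℝ) 1) := uniqueDiffOn_Icc zero_lt_one
    rw [iteratedDerivWithin_succ, iteratedDeriv_succ]
    have h1 : derivWithin (iteratedDerivWithin i φ (Set.Icc 0 1)) (Set.Icc 0 1) y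
        = derivWithin (iteratedDeriv i φ) (Set.Icc 0 1) y := by
      apply derivWithin_congr
      · exact fun z hz => ih (Nat.le_of_succ_le hi) z hz
      · exact ih (Nat.le_of_succ_le hi) y hy
    rw [h1]
    exact (hφ.differentiable_iteratedDeriv i
      (by exact_mod_cast Nat.lt_of_succ_le hi)).differentiableAt.derivWithin (hud y hy)

private lemma taylor_bound {E' : Type*} [NormedAddCommGroup E'] [NormedSpace ℝ E']
    (m : ℕ) {g : E' → ℂ} (hg : ContDiff ℝ ((m+1 : ℕ) : ℕ∞) g) (x w : E') {B : ℝ}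
    (hB : ∀ s : ℝ, s ∈ Set.Icc (0:ℝ) 1 → ‖iteratedFDeriv ℝ (m+1) g (x + s • w)‖ ≤ B) :
    ‖g (x + w) - ∑ j ∈ Finset.range (m+1),
        ((Nat.factorial j : ℕ) : ℂ)⁻¹ * iteratedFDeriv ℝ j g x (fun _ => w)‖
      ≤ B * ‖w‖ ^ (m+1) / (Nat.factorial m) := by
  set φ : ℝ → ℂ := fun s => g (x + s • w) with hφdef
  have hφ : ContDiff ℝ ((m+1 : ℕ) : ℕ∞) φ := by
    apply hg.comp
    exact contDiff_const.add (contDiff_id.smul contDiff_const)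
  have hline := iteratedDeriv_line hg x w
  have hwithin := iteratedDerivWithin_Icc_eq hφ
  have key := taylor_mean_remainder_bound (f := φ) (a := 0) (b := 1) (x := 1)
    (n := m) (C := B * ‖w‖ ^ (m+1)) zero_le_one (hφ.contDiffOn)
    (by constructor <;> norm_num)
    (fun y hy => by
      rw [hwithin (m+1) le_rfl y hy, hline (m+1) le_rfl y]
      calc ‖iteratedFDeriv ℝ (m+1) g (x + y • w) (fun _ => w)‖
          ≤ ‖iteratedFDeriv ℝ (m+1) g (x + y • w)‖ * ∏ _i : Fin (m+1), ‖w‖ :=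
            ContinuousMultilinearMap.le_opNorm _ _
        _ ≤ B * ‖w‖ ^ (m+1) := by
            rw [Finset.prod_const, Finset.card_univ, Fintype.card_fin]
            exact mul_le_mul_of_nonneg_right (hB y hy) (pow_nonneg (norm_nonneg _) _))
  have h1 : φ 1 = g (x + w) := by simp [hφdef]
  have h2 : taylorWithinEval φ m (Set.Icc 0 1) 0 1
      = ∑ j ∈ Finset.range (m+1), ((Nat.factorial j : ℕ) : ℂ)⁻¹ * iteratedFDeriv ℝ j g x (fun _ => w) := by
    rw [taylor_within_apply]
    refine Finset.sum_congr rfl fun j hj => ?_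
    have hjm : j ≤ m + 1 := le_of_lt (by simpa using Finset.mem_range.mp hj)
    rw [hwithin j hjm 0 (by constructor <;> norm_num), hline j hjm 0]
    simp [Complex.real_smul]
  rw [h1, h2] at key
  simpa using key

private lemma moment_multilinear (n k : ℕ) (f : EuclideanSpace ℝ (Fin n) → ℂ)
    (hfmom : VanishingMoments n k f) (j : ℕ) (hj : j + 1 ≤ k)
    (T : ContinuousMultilinearMap ℝ (fun _ : Fin j => EuclideanSpace ℝ (Fin n)) ℂ) :
    Integrable (fun z => f z * T (fun _ => z)) ∧ (∫ z, f z * T (fun _ => z)) = 0 := by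
  classical
  set b : Fin n → EuclideanSpace ℝ (Fin n) := fun l => EuclideanSpace.single l (1:ℝ) with hb
  set cnt : (Fin j → Fin n) → Fin n → ℕ :=
    fun r l => (Finset.univ.filter fun i => r i = l).card with hcntdef
  have hrep : ∀ z : EuclideanSpace ℝ (Fin n), z = ∑ l, z l • b l := by
    intro z
    have h := (EuclideanSpace.basisFun (Fin n) ℝ).sum_repr z
    simp only [EuclideanSpace.basisFun_repr, EuclideanSpace.basisFun_apply] at h
    exact h.symm
  have hprod : ∀ (r : Fin j → Fin n) (z : EuclideanSpace ℝ (Fin n)),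
      ((∏ i, z (r i) : ℝ) : ℂ) = mono n (cnt r) z := by
    intro r z
    have h1 : (∏ i, z (r i) : ℝ) = ∏ l, (z l) ^ (cnt r l) := by
      rw [← Finset.prod_fiberwise Finset.univ r (fun i => z (r i))]
      refine Finset.prod_congr rfl fun l _ => ?_
      rw [Finset.prod_congr rfl (fun i hi => by
        rw [(Finset.mem_filter.mp hi).2]), Finset.prod_const]
    rw [h1, mono]
    push_cast
    rfl
  have hcnt : ∀ r : Fin j → Fin n, (∑ l, cnt r l) + 1 ≤ k := by
    intro r
    have : (Finset.univ : Finset (Fin j)).card = ∑ l, cnt r l :=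
      Finset.card_eq_sum_card_fiberwise (fun i _ => Finset.mem_univ (r i))
    rw [← this]
    simpa using hj
  have expand : ∀ z : EuclideanSpace ℝ (Fin n), T (fun _ => z)
      = ∑ r : Fin j → Fin n, mono n (cnt r) z * T (fun i => b (r i)) := by
    intro z
    have h0 : T (fun _ : Fin j => z) = T (fun _ : Fin j => ∑ l, z l • b l) := by
      rw [← hrep z]
    rw [h0, T.map_sum]
    refine Finset.sum_congr rfl fun r _ => ?_
    rw [T.map_smul_univ, ← hprod r z, Complex.real_smul]
  have key : (fun z => f z * T (fun _ => z))
      = fun z => ∑ r : Fin j → Fin n,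
          T (fun i => b (r i)) * (f z * mono n (cnt r) z) := by
    funext z
    rw [expand z, Finset.mul_sum]
    exact Finset.sum_congr rfl fun r _ => by ring
  have hint : ∀ r : Fin j → Fin n,
      Integrable (fun z => T (fun i => b (r i)) * (f z * mono n (cnt r) z)) :=
    fun r => ((hfmom (cnt r) (hcnt r)).1).const_mul _
  constructor
  · rw [key]; exact integrable_finset_sum _ fun r _ => hint r
  · rw [key, integral_finset_sum _ fun r _ => hint r]
    refine Finset.sum_eq_zero fun r _ => ?_
    rw [integral_const_mul, (hfmom (cnt r) (hcnt r)).2, mul_zero]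

set_option maxHeartbeats 1000000 in
/-- Lemma 3.2(b) of Führ–Mayeli, Euclidean case: if all partial derivatives of `g` up to
order `k` have polynomial decay of order `N`, and `f` has vanishing moments of order `k`
and polynomial decay of order `N + k + n + 1`, then
`|(g * D_t f)(x)| ≤ C t^{−k} (1 + |x|)^{−N}` for all `x` and all `t > 1`. -/
theorem decay_conv_b (n N k : ℕ) (hk : 1 ≤ k)
    (f g : EuclideanSpace ℝ (Fin n) → ℂ)
    (hg : ContDiff ℝ k g) (Cg : ℝ)
    (hgd : ∀ i : ℕ, i ≤ k → ∀ x, ‖iteratedFDeriv ℝ i g x‖ ≤ Cg * (1 + ‖x‖) ^ (-(N : ℝ)))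
    (hfm : Measurable f) (hfmom : VanishingMoments n k f) (Cf : ℝ)
    (hfd : ∀ x, ‖f x‖ ≤ Cf * (1 + ‖x‖) ^ (-((N : ℝ) + k + n + 1))) :
    ∃ C : ℝ, ∀ (x : EuclideanSpace ℝ (Fin n)) (t : ℝ), 1 < t →
      ‖conv n g (dil n t f) x‖ ≤ C * t ^ (-(k : ℝ)) * (1 + ‖x‖) ^ (-(N : ℝ)) := by
  classical
  have hCg0 : 0 ≤ Cg := by
    have h := hgd 0 (Nat.zero_le k) 0
    simpa using le_trans (norm_nonneg _) h
  have hCf0 : 0 ≤ Cf := by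
    have h := hfd 0
    simpa using le_trans (norm_nonneg _) h
  obtain ⟨m, rfl⟩ : ∃ m, k = m + 1 := ⟨k - 1, (Nat.succ_pred_eq_of_pos hk).symm⟩
  -- integrability of the weight
  have hwt : Integrable (fun z : EuclideanSpace ℝ (Fin n) => (1 + ‖z‖) ^ (-((n:ℝ)+1))) := by
    apply integrable_one_add_norm
    rw [finrank_euclideanSpace_fin]
    exact_mod_cast lt_add_one n
  set A : ℝ := ∫ z : EuclideanSpace ℝ (Fin n), (1 + ‖z‖) ^ (-((n:ℝ)+1)) with hAdef
  have hA0 : 0 ≤ A := integral_nonneg fun z => Real.rpow_nonneg (by positivity) _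
  set M₀ : ℝ := Cf * Cg * 2 ^ N * 3 ^ (m+1) * (m + 2) with hM₀def
  have hM₀0 : 0 ≤ M₀ := by positivity
  refine ⟨M₀ * A, fun x t ht => ?_⟩
  have ht0 : (0:ℝ) < t := lt_trans zero_lt_one ht
  set u : ℝ := t⁻¹ with hudef
  have hu0 : 0 < u := inv_pos.mpr ht0
  have hu1 : u ≤ 1 := by
    rw [hudef]; exact inv_le_one_of_one_le₀ ht.le
  have hut : u * t = 1 := inv_mul_cancel₀ ht0.ne'
  -- Step A : change of variables
  have hsmul : ∀ y : EuclideanSpace ℝ (Fin n), u • (t • y) = y := fun y => by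
    rw [smul_smul, hut, one_smul]
  have hconv : conv n g (dil n t f) x = ∫ z, f z * g (x - u • z) := by
    have h1 : conv n g (dil n t f) x = ∫ y, g (x - y) * dil n t f y := by
      show (∫ y, g y * dil n t f (x - y)) = _
      rw [← MeasureTheory.integral_sub_left_eq_self
        (fun y => g (x - y) * dil n t f y) volume x]
      congr 1; funext y; rw [sub_sub_cancel]
    have hc := MeasureTheory.Measure.integral_comp_smul (volume)
      (fun z => f z * g (x - u • z)) t
    simp only [hsmul] at hc
    rw [finrank_euclideanSpace_fin, abs_of_pos (by positivity : (0:ℝ) < (t ^ n)⁻¹)] at hc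
    have h3 : (∫ y, g (x - y) * dil n t f y)
        = (t ^ n : ℝ) • ∫ y, f (t • y) * g (x - y) := by
      rw [← integral_smul]
      congr 1; funext y
      show g (x - y) * ((t:ℂ) ^ n * f (t • y)) = _
      rw [Complex.real_smul]
      push_cast
      ring
    rw [h1, h3, hc, smul_smul, mul_inv_cancel₀ (by positivity : (t:ℝ)^n ≠ 0), one_smul]
  -- the Taylor polynomial
  set P : EuclideanSpace ℝ (Fin n) → ℂ := fun z =>
    ∑ j ∈ Finset.range (m+1), ((Nat.factorial j : ℕ) : ℂ)⁻¹ *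
      iteratedFDeriv ℝ j g x (fun _ => -(u • z)) with hPdef
  have hPkey : (fun z => f z * P z) = fun z =>
      ∑ j ∈ Finset.range (m+1), (((Nat.factorial j : ℕ) : ℂ)⁻¹ * (((-u) ^ j : ℝ) : ℂ)) *
        (f z * (iteratedFDeriv ℝ j g x) (fun _ => z)) := by
    funext z
    rw [hPdef, Finset.mul_sum]
    refine Finset.sum_congr rfl fun j _ => ?_
    have h1 : (fun _ : Fin j => -(u • z)) = fun _ : Fin j => (-u) • z := by
      funext i; rw [neg_smul]
    have h2 : (iteratedFDeriv ℝ j g x) (fun _ : Fin j => (-u) • z)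
        = ((-u) ^ j : ℝ) • (iteratedFDeriv ℝ j g x) (fun _ => z) := by
      rw [show (fun _ : Fin j => (-u) • z) = (fun i : Fin j => (fun _ : Fin j => -u) i • (fun _ : Fin j => z) i) from rfl,
        (iteratedFDeriv ℝ j g x).map_smul_univ]
      rw [Finset.prod_const, Finset.card_univ, Fintype.card_fin]
    rw [h1, h2, Complex.real_smul]
    ring
  have hPj : ∀ j ∈ Finset.range (m+1),
      Integrable (fun z => f z * (iteratedFDeriv ℝ j g x) (fun _ => z)) ∧
        (∫ z, f z * (iteratedFDeriv ℝ j g x) (fun _ => z)) = 0 := fun j hj =>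
    moment_multilinear n (m+1) f hfmom j (Finset.mem_range.mp hj) _
  have hPint : Integrable (fun z => f z * P z) := by
    rw [hPkey]
    exact integrable_finset_sum _ fun j hj => ((hPj j hj).1).const_mul _
  have hPzero : (∫ z, f z * P z) = 0 := by
    rw [hPkey, integral_finset_sum _ fun j hj => ((hPj j hj).1).const_mul _]
    exact Finset.sum_eq_zero fun j hj => by rw [integral_const_mul, (hPj j hj).2, mul_zero]
  -- integrability of main term
  have hgc : Continuous fun z : EuclideanSpace ℝ (Fin n) => g (x - u • z) :=
    hg.continuous.comp (continuous_const.sub (continuous_id.const_smul u))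
  have hmeas : AEStronglyMeasurable (fun z => f z * g (x - u • z)) volume :=
    (hfm.aestronglyMeasurable.mul hgc.aestronglyMeasurable)
  have hgb : ∀ y, ‖g y‖ ≤ Cg := by
    intro y
    refine le_trans (by simpa using hgd 0 (Nat.zero_le (m+1)) y) ?_
    have h1 : (1 + ‖y‖) ^ (-(N:ℝ)) ≤ 1 :=
      Real.rpow_le_one_of_one_le_of_nonpos (by simp [norm_nonneg])
        (neg_nonpos.mpr (Nat.cast_nonneg N))
    exact mul_le_of_le_one_right hCg0 (inv_le_one_of_one_le₀ (one_le_pow₀ (by linarith [norm_nonneg y])))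
  have hterm_int : Integrable (fun z => f z * g (x - u • z)) := by
    refine ((hwt.const_mul (Cf * Cg)).mono' hmeas (Filter.Eventually.of_forall fun z => ?_))
    rw [norm_mul]
    have h1 : ‖f z‖ ≤ Cf * (1 + ‖z‖) ^ (-((n:ℝ)+1)) := by
      refine le_trans (hfd z) (mul_le_mul_of_nonneg_left ?_ hCf0)
      apply Real.rpow_le_rpow_of_exponent_le (by simp [norm_nonneg])
      push_cast; nlinarith [Nat.cast_nonneg (α := ℝ) N, Nat.cast_nonneg (α := ℝ) (m+1)]
    calc ‖f z‖ * ‖g (x - u • z)‖ ≤ (Cf * (1 + ‖z‖) ^ (-((n:ℝ)+1))) * Cg := by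
          apply mul_le_mul h1 (hgb _) (norm_nonneg _) (by positivity)
      _ = Cf * Cg * (1 + ‖z‖) ^ (-((n:ℝ)+1)) := by ring
  -- pointwise bound on the remainder
  have hgk : ContDiff ℝ ((m+1 : ℕ) : ℕ∞) g := by exact_mod_cast hg
  have hbound : ∀ z, ‖f z * (g (x - u • z) - P z)‖ ≤
      (M₀ * t ^ (-((m+1:ℕ):ℝ)) * (1 + ‖x‖) ^ (-(N:ℝ))) * (1 + ‖z‖) ^ (-((n:ℝ)+1)) := by
    intro z
    set w : EuclideanSpace ℝ (Fin n) := -(u • z) with hwdef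
    set D : ℝ := 1 + ‖x‖ with hDdef
    set Z : ℝ := 1 + ‖z‖ with hZdef
    have hD1 : 1 ≤ D := by rw [hDdef]; linarith [norm_nonneg x]
    have hZ1 : 1 ≤ Z := by rw [hZdef]; linarith [norm_nonneg z]
    have hD0 : (0:ℝ) < D := lt_of_lt_of_le one_pos hD1
    have hZ0 : (0:ℝ) < Z := lt_of_lt_of_le one_pos hZ1
    have hzZ : ‖z‖ ≤ Z := by rw [hZdef]; linarith
    have hnormw : ‖w‖ = u * ‖z‖ := by
      rw [hwdef, norm_neg, norm_smul, Real.norm_eq_abs, abs_of_pos hu0]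
    have hupow : t ^ (-((m+1:ℕ):ℝ)) = u ^ (m+1) := by
      rw [Real.rpow_neg ht0.le, Real.rpow_natCast, hudef, inv_pow]
    have hNneg : -(N:ℝ) ≤ 0 := neg_nonpos.mpr (Nat.cast_nonneg N)
    have hfz : ‖f z‖ ≤ Cf * (Z ^ (-(N:ℝ)) * (Z ^ (m+1))⁻¹ * Z ^ (-((n:ℝ)+1))) := by
      refine le_trans (hfd z) (le_of_eq ?_)
      congr 1
      rw [← Real.rpow_natCast Z (m+1), ← Real.rpow_neg hZ0.le,
        ← Real.rpow_add hZ0, ← Real.rpow_add hZ0]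
      congr 1
      push_cast
      ring
    have hRz : g (x - u • z) - P z
        = g (x + w) - ∑ j ∈ Finset.range (m+1),
            ((Nat.factorial j : ℕ) : ℂ)⁻¹ * iteratedFDeriv ℝ j g x (fun _ => w) := by
      rw [show x - u • z = x + w by rw [hwdef, sub_eq_add_neg], hPdef]
    have h5 : (D/2) ^ (-(N:ℝ)) = 2^N * D^(-(N:ℝ)) := by
      rw [div_eq_mul_inv, Real.mul_rpow hD0.le (by norm_num),
        Real.inv_rpow (by norm_num : (0:ℝ) ≤ 2), ← Real.rpow_neg (by norm_num : (0:ℝ) ≤ 2),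
        neg_neg, Real.rpow_natCast]
      ring
    rw [hupow]
    rcases le_or_gt ‖z‖ (t * D / 2) with hle | hlt
    · -- near regime
      have hwD : ‖w‖ ≤ D / 2 := by
        rw [hnormw]
        calc u * ‖z‖ ≤ u * (t * D / 2) := mul_le_mul_of_nonneg_left hle hu0.le
          _ = (u * t) * (D / 2) := by ring
          _ = D / 2 := by rw [hut, one_mul]
      have hB : ∀ s : ℝ, s ∈ Set.Icc (0:ℝ) 1 →
          ‖iteratedFDeriv ℝ (m+1) g (x + s • w)‖ ≤ Cg * (2^N * D^(-(N:ℝ))) := by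
        intro s hs
        have hlow : D / 2 ≤ 1 + ‖x + s • w‖ := by
          have h2 : ‖x‖ ≤ ‖x + s • w‖ + ‖s • w‖ := by
            calc ‖x‖ = ‖(x + s • w) - s • w‖ := by rw [add_sub_cancel_right]
              _ ≤ ‖x + s • w‖ + ‖s • w‖ := norm_sub_le _ _
          have h3 : ‖s • w‖ ≤ D / 2 := by
            rw [norm_smul, Real.norm_eq_abs, abs_of_nonneg hs.1]
            calc s * ‖w‖ ≤ 1 * ‖w‖ := mul_le_mul_of_nonneg_right hs.2 (norm_nonneg _)
              _ = ‖w‖ := one_mul _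
              _ ≤ D / 2 := hwD
          rw [hDdef] at h3 ⊢
          linarith
        have h4 : (1 + ‖x + s • w‖) ^ (-(N:ℝ)) ≤ (D/2) ^ (-(N:ℝ)) :=
          Real.rpow_le_rpow_of_nonpos (by positivity) hlow hNneg
        calc ‖iteratedFDeriv ℝ (m+1) g (x + s • w)‖
            ≤ Cg * (1 + ‖x + s • w‖) ^ (-(N:ℝ)) := hgd (m+1) le_rfl _
          _ ≤ Cg * (2^N * D^(-(N:ℝ))) := by
              rw [← h5]; exact mul_le_mul_of_nonneg_left h4 hCg0
      have htay := taylor_bound m hgk x w hB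
      have hB0 : (0:ℝ) ≤ Cg * (2^N * D^(-(N:ℝ))) := by positivity
      have hRb : ‖g (x - u • z) - P z‖
          ≤ Cg * (2^N * D^(-(N:ℝ))) * (u^(m+1) * Z^(m+1)) := by
        rw [hRz]
        refine le_trans htay ?_
        have hwk : ‖w‖^(m+1) ≤ u^(m+1) * Z^(m+1) := by
          rw [hnormw, mul_pow]
          exact mul_le_mul_of_nonneg_left
            (pow_le_pow_left₀ (norm_nonneg z) hzZ _) (by positivity)
        have hfac1 : (1:ℝ) ≤ (Nat.factorial m : ℝ) :=
          Nat.one_le_cast.mpr m.factorial_pos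
        calc Cg * (2^N * D^(-(N:ℝ))) * ‖w‖^(m+1) / (Nat.factorial m)
            ≤ Cg * (2^N * D^(-(N:ℝ))) * ‖w‖^(m+1) :=
              div_le_self (by positivity) hfac1
          _ ≤ Cg * (2^N * D^(-(N:ℝ))) * (u^(m+1) * Z^(m+1)) :=
              mul_le_mul_of_nonneg_left hwk hB0
      have hM : Cf * Cg * 2^N ≤ M₀ := by
        have h1 : (1:ℝ) ≤ 3^(m+1) * ((m:ℝ)+2) := by
          have h2 : (1:ℝ) ≤ 3^(m+1) := one_le_pow₀ (by norm_num)
          nlinarith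
        calc Cf * Cg * (2:ℝ)^N = Cf * Cg * 2^N * 1 := (mul_one _).symm
          _ ≤ Cf * Cg * 2^N * (3^(m+1) * ((m:ℝ)+2)) :=
              mul_le_mul_of_nonneg_left h1 (by positivity)
          _ = M₀ := by rw [hM₀def]; ring
      calc ‖f z * (g (x - u • z) - P z)‖
          = ‖f z‖ * ‖g (x - u • z) - P z‖ := norm_mul _ _
        _ ≤ (Cf * (Z ^ (-(N:ℝ)) * (Z ^ (m+1))⁻¹ * Z ^ (-((n:ℝ)+1)))) *
            (Cg * (2^N * D^(-(N:ℝ))) * (u^(m+1) * Z^(m+1))) :=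
            mul_le_mul hfz hRb (norm_nonneg _) (by positivity)
        _ = (Cf * Cg * 2^N * (u^(m+1) * D^(-(N:ℝ)) * Z ^ (-((n:ℝ)+1)))) *
            (Z ^ (-(N:ℝ)) * ((Z ^ (m+1))⁻¹ * Z^(m+1))) := by ring
        _ ≤ (Cf * Cg * 2^N * (u^(m+1) * D^(-(N:ℝ)) * Z ^ (-((n:ℝ)+1)))) * 1 := by
            refine mul_le_mul_of_nonneg_left ?_ (by positivity)
            rw [inv_mul_cancel₀ (by positivity : (Z:ℝ)^(m+1) ≠ 0), mul_one]
            exact Real.rpow_le_one_of_one_le_of_nonpos hZ1 hNneg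
        _ = (Cf * Cg * 2^N) * (u^(m+1) * D^(-(N:ℝ)) * Z ^ (-((n:ℝ)+1))) := by ring
        _ ≤ M₀ * (u^(m+1) * D^(-(N:ℝ)) * Z ^ (-((n:ℝ)+1))) :=
            mul_le_mul_of_nonneg_right hM (by positivity)
        _ = (M₀ * u^(m+1) * D^(-(N:ℝ))) * Z ^ (-((n:ℝ)+1)) := by ring
    · -- far regime
      have hDZ : D / 2 ≤ Z := by nlinarith
      have hZN : Z ^ (-(N:ℝ)) ≤ 2^N * D^(-(N:ℝ)) := by
        rw [← h5]
        exact Real.rpow_le_rpow_of_nonpos (by positivity) hDZ hNneg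
      have huZ : D / 2 ≤ u * Z := by
        have he : u * (t * D / 2) = D / 2 := by
          rw [show u * (t * D / 2) = (u * t) * (D / 2) by ring, hut, one_mul]
        calc D/2 = u * (t * D / 2) := he.symm
          _ ≤ u * Z := mul_le_mul_of_nonneg_left (le_trans hlt.le hzZ) hu0.le
      have hwuZ : ‖w‖ ≤ u * Z := by
        rw [hnormw]; exact mul_le_mul_of_nonneg_left hzZ hu0.le
      have h3uZ : 1 + ‖w‖ ≤ 3 * (u * Z) := by nlinarith [hwuZ, huZ, hD1]
      have h1w : (1:ℝ) ≤ 1 + ‖w‖ := by linarith [norm_nonneg w]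
      have hone : (1:ℝ) ≤ (1 + ‖w‖)^(m+1) := one_le_pow₀ h1w
      have hRb : ‖g (x - u • z) - P z‖ ≤ Cg * ((m:ℝ)+2) * (1 + ‖w‖)^(m+1) := by
        rw [hRz]
        refine le_trans (norm_sub_le _ _) ?_
        have hterm : ∀ j ∈ Finset.range (m+1),
            ‖((Nat.factorial j : ℕ) : ℂ)⁻¹ * iteratedFDeriv ℝ j g x (fun _ => w)‖
              ≤ Cg * (1 + ‖w‖)^(m+1) := by
          intro j hj
          have hjk : j ≤ m+1 := le_of_lt (Finset.mem_range.mp hj)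
          rw [norm_mul, norm_inv]
          have hfj : ‖((Nat.factorial j : ℕ) : ℂ)‖ = (Nat.factorial j : ℝ) := by
            rw [Complex.norm_natCast]
          have h6 : ‖iteratedFDeriv ℝ j g x (fun _ => w)‖ ≤ Cg * (1+‖w‖)^(m+1) := by
            have hT : ‖iteratedFDeriv ℝ j g x‖ ≤ Cg := by
              refine le_trans (hgd j hjk x) ?_
              have hx1 : (1 + ‖x‖) ^ (-(N:ℝ)) ≤ 1 :=
                Real.rpow_le_one_of_one_le_of_nonpos (by linarith [norm_nonneg x]) hNneg
              nlinarith [Real.rpow_nonneg (show (0:ℝ) ≤ 1+‖x‖ by positivity) (-(N:ℝ))]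
            have hwj : ‖w‖^j ≤ (1+‖w‖)^(m+1) := by
              calc ‖w‖^j ≤ (1+‖w‖)^j := pow_le_pow_left₀ (norm_nonneg w) (by linarith) j
                _ ≤ (1+‖w‖)^(m+1) := pow_le_pow_right₀ h1w hjk
            calc ‖iteratedFDeriv ℝ j g x (fun _ => w)‖
                ≤ ‖iteratedFDeriv ℝ j g x‖ * ∏ _i : Fin j, ‖w‖ :=
                  ContinuousMultilinearMap.le_opNorm _ _
              _ = ‖iteratedFDeriv ℝ j g x‖ * ‖w‖^j := by
                  rw [Finset.prod_const, Finset.card_univ, Fintype.card_fin]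
              _ ≤ Cg * (1+‖w‖)^(m+1) :=
                  mul_le_mul hT hwj (pow_nonneg (norm_nonneg w) j) hCg0
          rw [hfj]
          have hinv1 : ((Nat.factorial j : ℝ))⁻¹ ≤ 1 := by
            rw [inv_le_one_iff₀]
            right
            exact Nat.one_le_cast.mpr j.factorial_pos
          calc (Nat.factorial j : ℝ)⁻¹ * ‖iteratedFDeriv ℝ j g x (fun _ => w)‖
              ≤ 1 * (Cg * (1+‖w‖)^(m+1)) :=
                mul_le_mul hinv1 h6 (norm_nonneg _) zero_le_one
            _ = Cg * (1+‖w‖)^(m+1) := one_mul _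
        calc ‖g (x+w)‖ + ‖∑ j ∈ Finset.range (m+1),
                ((Nat.factorial j : ℕ) : ℂ)⁻¹ * iteratedFDeriv ℝ j g x (fun _ => w)‖
            ≤ Cg * (1+‖w‖)^(m+1) + ∑ j ∈ Finset.range (m+1), Cg * (1+‖w‖)^(m+1) := by
              refine add_le_add ?_ (le_trans (norm_sum_le _ _) (Finset.sum_le_sum hterm))
              exact le_trans (hgb (x+w)) (le_mul_of_one_le_right hCg0 hone)
          _ = Cg * ((m:ℝ)+2) * (1+‖w‖)^(m+1) := by
              rw [Finset.sum_const, Finset.card_range, nsmul_eq_mul]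
              push_cast
              ring
      have hpow3 : (1 + ‖w‖)^(m+1) ≤ 3^(m+1) * (u^(m+1) * Z^(m+1)) := by
        calc (1+‖w‖)^(m+1) ≤ (3 * (u*Z))^(m+1) :=
              pow_le_pow_left₀ (by positivity) h3uZ _
          _ = 3^(m+1) * (u^(m+1) * Z^(m+1)) := by rw [mul_pow, mul_pow]
      calc ‖f z * (g (x - u • z) - P z)‖
          = ‖f z‖ * ‖g (x - u • z) - P z‖ := norm_mul _ _
        _ ≤ (Cf * (Z ^ (-(N:ℝ)) * (Z ^ (m+1))⁻¹ * Z ^ (-((n:ℝ)+1)))) *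
            (Cg * ((m:ℝ)+2) * (3^(m+1) * (u^(m+1) * Z^(m+1)))) := by
            refine mul_le_mul hfz (le_trans hRb ?_) (norm_nonneg _) (by positivity)
            exact mul_le_mul_of_nonneg_left hpow3 (by positivity)
        _ = (Cf * Cg * ((m:ℝ)+2) * 3^(m+1) * u^(m+1) * Z^(-((n:ℝ)+1)) *
              ((Z^(m+1))⁻¹ * Z^(m+1))) * Z ^ (-(N:ℝ)) := by ring
        _ ≤ (Cf * Cg * ((m:ℝ)+2) * 3^(m+1) * u^(m+1) * Z^(-((n:ℝ)+1)) *
              ((Z^(m+1))⁻¹ * Z^(m+1))) * (2^N * D^(-(N:ℝ))) :=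
            mul_le_mul_of_nonneg_left hZN (by positivity)
        _ = (M₀ * u^(m+1) * D^(-(N:ℝ))) * Z ^ (-((n:ℝ)+1)) := by
            rw [inv_mul_cancel₀ (by positivity : (Z:ℝ)^(m+1) ≠ 0), hM₀def]
            ring
  -- assemble
  have hRint : Integrable (fun z => f z * (g (x - u • z) - P z)) := by
    have : (fun z => f z * (g (x - u • z) - P z))
        = fun z => f z * g (x - u • z) - f z * P z := by funext z; ring
    rw [this]; exact hterm_int.sub hPint
  have hsplit : (∫ z, f z * g (x - u • z)) = ∫ z, f z * (g (x - u • z) - P z) := by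
    have : (fun z => f z * g (x - u • z))
        = fun z => (f z * (g (x - u • z) - P z)) + f z * P z := by funext z; ring
    rw [this, integral_add hRint hPint, hPzero, add_zero]
  rw [hconv, hsplit]
  calc ‖∫ z, f z * (g (x - u • z) - P z)‖
      ≤ ∫ z, (M₀ * t ^ (-((m+1:ℕ):ℝ)) * (1 + ‖x‖) ^ (-(N:ℝ))) * (1 + ‖z‖) ^ (-((n:ℝ)+1)) := by
        refine norm_integral_le_of_norm_le (hwt.const_mul _) (Filter.Eventually.of_forall hbound)
    _ = (M₀ * t ^ (-((m+1:ℕ):ℝ)) * (1 + ‖x‖) ^ (-(N:ℝ))) * A := by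
        rw [integral_const_mul]
    _ = M₀ * A * t ^ (-((m+1:ℕ):ℝ)) * (1 + ‖x‖) ^ (-(N:ℝ)) := by ring
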